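/- arXiv:1304.7590 — 3 statements merged into one kernel-verified Lean document; each statement's English description precedes it below -/
import Mathlib

section
/- Let AS be any set of timed traces over A = I ⊎ O. The family F of all extension-closed supersets TT of AS with respect to which no timed trace is auto-⊥ or semi-⊥ contains the set of all timed traces and is closed under arbitrary nonempty intersections. Consequently, the intersection of all members of F itself belongs to F, i.e. there exists a least extension-closed superset AS^N of AS with respect to which no timed trace is auto-⊥ or semi-⊥ (the normalisation, or ⊥-backpropagation, of AS is well defined). -/
open Classical

/-- A timed event: either an action or a (delay given by a) real number. -/
abbrev TEvent (α : Type*) := α ⊕ ℝ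

/-- `tt` is a timed trace over alphabet `A`: every element is an action in `A`
or a positive real delay, and no two reals are adjacent. -/
def IsTrace {α : Type*} (A : Set α) (tt : List (TEvent α)) : Prop :=
  (∀ x ∈ tt, Sum.elim (· ∈ A) (fun d => 0 < d) x) ∧
  tt.Chain' (fun x y => x.isLeft = true ∨ y.isLeft = true)

/-- Concatenation of timed traces, coalescing adjacent reals by summing them. -/
def tcat {α : Type*} : List (TEvent α) → List (TEvent α) → List (TEvent α)
  | [], ys => ys
  | [Sum.inr d], Sum.inr d' :: ys => Sum.inr (d + d') :: ys
  | x :: xs, ys => x :: tcat xs ys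

/-- Duration of a timed trace: the sum of all its reals. -/
def dur {α : Type*} (tt : List (TEvent α)) : ℝ :=
  (tt.map (Sum.elim (fun _ => (0 : ℝ)) id)).sum

/-- Action count of a timed trace. -/
def acount {α : Type*} (tt : List (TEvent α)) : ℕ :=
  (tt.filter Sum.isLeft).length

/-- Projection of a timed trace onto a sub-alphabet `A₀`: remove actions not in
`A₀` and coalesce reals that thereby become adjacent. -/
noncomputable def proj {α : Type*} (A₀ : Set α) : List (TEvent α) → List (TEvent α)
  | [] => []
  | Sum.inl a :: xs => if a ∈ A₀ then Sum.inl a :: proj A₀ xs else proj A₀ xs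
  | Sum.inr d :: xs => tcat [Sum.inr d] (proj A₀ xs)

/-- `tt⌢⟨d⟩` for `d ≥ 0`, where `tt⌢⟨0⟩` denotes `tt` itself. -/
noncomputable def dext {α : Type*} (tt : List (TEvent α)) (d : ℝ) : List (TEvent α) :=
  if d = 0 then tt else tcat tt [Sum.inr d]

/-- `TT` is extension-closed (over alphabet `A`). -/
def ExtClosed {α : Type*} (A : Set α) (TT : Set (List (TEvent α))) : Prop :=
  ∀ tt ∈ TT, (∀ a ∈ A, tcat tt [Sum.inl a] ∈ TT) ∧
    (∀ d : ℝ, 0 < d → tcat tt [Sum.inr d] ∈ TT)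

/-- `tt` is auto-⊥ (resp. auto-⊤) w.r.t. `TT` when `X` is the output (resp.
input) alphabet: `tt ∉ TT` but some one-action `X`-extension of `tt` is in `TT`. -/
def AutoErr {α : Type*} (X : Set α) (TT : Set (List (TEvent α)))
    (tt : List (TEvent α)) : Prop :=
  tt ∉ TT ∧ ∃ e ∈ X, tcat tt [Sum.inl e] ∈ TT

/-- `tt` is semi-⊥ (resp. semi-⊤) w.r.t. `TT` when `Y` is the input (resp.
output) alphabet. -/
def SemiErr {α : Type*} (Y : Set α) (TT : Set (List (TEvent α)))
    (tt : List (TEvent α)) : Prop :=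
  tt ∉ TT ∧ ∃ d : ℝ, 0 < d ∧ dext tt d ∈ TT ∧
    ∀ d₀ : ℝ, 0 ≤ d₀ → d₀ < d → ∀ e ∈ Y, tcat (dext tt d₀) [Sum.inl e] ∈ TT

/-- The family of extension-closed supersets of `S` (consisting of timed traces
over `A`) with respect to which no timed trace is `AutoErr X` or `SemiErr Y`. -/
def ErrFreeFamily {α : Type*} (A X Y : Set α) (S : Set (List (TEvent α))) :
    Set (Set (List (TEvent α))) :=
  {TT | S ⊆ TT ∧ TT ⊆ {tt | IsTrace A tt} ∧ ExtClosed A TT ∧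
    ∀ tt, IsTrace A tt → ¬ AutoErr X TT tt ∧ ¬ SemiErr Y TT tt}

/-- The least extension-closed superset of `S` with respect to which no timed
trace is `AutoErr X` or `SemiErr Y`.  With `X := O`, `Y := I` this is the
normalisation (⊥-backpropagation) `S^N`; with `X := I`, `Y := O` it is the
realisation (⊤-backpropagation) `S^R`. -/
def backprop {α : Type*} (A X Y : Set α) (S : Set (List (TEvent α))) :
    Set (List (TEvent α)) :=
  ⋂₀ ErrFreeFamily A X Y S

/-- `TT` is `X`-receptive (I-receptive for `X := I`, O-receptive for `X := O`). -/
def Receptive {α : Type*} (X : Set α) (TT : Set (List (TEvent α))) : Prop :=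
  ∀ tt ∈ TT,
    (∀ e ∈ X, tcat tt [Sum.inl e] ∈ TT) ∧
    (∀ d : ℝ, 0 < d → tcat tt [Sum.inr d] ∉ TT →
      ∃ w, w ≠ [] ∧ IsTrace X w ∧ (∃ a, w.getLast? = some (Sum.inl a)) ∧
        tcat tt w ∈ TT ∧ dur w < d)

lemma head?_isLeft_tcat {α : Type*} (xs ys : List (TEvent α)) (h : xs ≠ []) :
    (tcat xs ys).head?.map Sum.isLeft = xs.head?.map Sum.isLeft := by
  match xs, ys with
  | [], _ => exact absurd rfl h
  | [Sum.inr d], Sum.inr d' :: ys => simp [tcat]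
  | [Sum.inr d], [] => simp [tcat]
  | [Sum.inr d], Sum.inl a :: ys => simp [tcat]
  | [Sum.inl a], ys => simp [tcat]
  | Sum.inl a :: x' :: xs, ys => simp [tcat]
  | Sum.inr d :: x' :: xs, ys => simp [tcat]

lemma isTrace_tcat_single {α : Type*} {A : Set α} (e : TEvent α)
    (he : Sum.elim (· ∈ A) (fun d => 0 < d) e) :
    ∀ tt, IsTrace A tt → IsTrace A (tcat tt [e]) := by
  intro tt
  induction tt with
  | nil =>
    intro _
    refine ⟨by simpa [tcat] using he, by simp [tcat, List.Chain']⟩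
  | cons x xs ih =>
    rintro ⟨h1, h2⟩
    match x, xs, e with
    | Sum.inr d, [], Sum.inr d' =>
      refine ⟨?_, by simp [tcat, List.Chain']⟩
      intro z hz
      simp [tcat] at hz
      subst hz
      have hd : (0:ℝ) < d := by simpa using h1 (Sum.inr d) (by simp)
      simpa using add_pos hd (by simpa using he)
    | Sum.inr d, [], Sum.inl a =>
      refine ⟨?_, by simp [tcat, List.Chain']⟩
      intro z hz
      simp [tcat] at hz
      rcases hz with hz | hz <;> subst hz
      · simpa using h1 (Sum.inr d) (by simp)
      · simpa using he
    | Sum.inl a, [], e =>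
      refine ⟨?_, ?_⟩
      · intro z hz
        simp [tcat] at hz
        rcases hz with hz | hz <;> subst hz
        · simpa using h1 (Sum.inl a) (by simp)
        · exact he
      · simp [tcat, List.Chain']
    | x, x' :: xs', e =>
      have hxs : IsTrace A (x' :: xs') :=
        ⟨fun z hz => h1 z (List.mem_cons_of_mem _ hz), h2.tail⟩
      have ihx := ih hxs
      have htc : tcat (x :: x' :: xs') [e] = x :: tcat (x' :: xs') [e] := by
        match x with
        | Sum.inl a => simp [tcat]
        | Sum.inr d => simp [tcat]
      rw [htc]
      refine ⟨?_, ?_⟩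
      · intro z hz
        rcases List.mem_cons.mp hz with hz | hz
        · subst hz; exact h1 _ (by simp)
        · exact ihx.1 z hz
      · rw [List.Chain', List.isChain_cons]
        refine ⟨?_, ihx.2⟩
        intro y hy
        have hhd := head?_isLeft_tcat (x' :: xs') [e] (by simp)
        have hR : x.isLeft = true ∨ x'.isLeft = true :=
          (List.isChain_cons_cons.mp h2).1
        rcases hR with hR | hR
        · exact Or.inl hR
        · right
          have : (tcat (x' :: xs') [e]).head? = some y := hy
          rw [this] at hhd
          simp at hhd
          rw [hhd]
          simpa using hR

lemma extClosed_univTraces {α : Type*} (A : Set α) :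
    ExtClosed A {tt | IsTrace A tt} := by
  intro tt htt
  constructor
  · intro a ha
    exact isTrace_tcat_single (Sum.inl a) (by simpa using ha) tt htt
  · intro d hd
    exact isTrace_tcat_single (Sum.inr d) (by simpa using hd) tt htt

/-- The family of extension-closed supersets of `AS` free of auto-⊥ and semi-⊥
traces contains the set of all timed traces, is closed under nonempty
intersections, and hence has a least element `AS^N` (normalisation is well
defined). -/
theorem normalisation_well_defined {α : Type*} (I O : Set α)
    (hIO : Disjoint I O) (AS : Set (List (TEvent α)))
    (hAS : AS ⊆ {tt | IsTrace (I ∪ O) tt}) :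
    {tt | IsTrace (I ∪ O) tt} ∈ ErrFreeFamily (I ∪ O) O I AS ∧
    (∀ G ⊆ ErrFreeFamily (I ∪ O) O I AS, G.Nonempty →
      ⋂₀ G ∈ ErrFreeFamily (I ∪ O) O I AS) ∧
    backprop (I ∪ O) O I AS ∈ ErrFreeFamily (I ∪ O) O I AS := by
  have hfull : {tt | IsTrace (I ∪ O) tt} ∈ ErrFreeFamily (I ∪ O) O I AS := by
    refine ⟨hAS, le_refl _, extClosed_univTraces _, ?_⟩
    intro tt htt
    constructor
    · rintro ⟨hnot, -⟩; exact hnot htt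
    · rintro ⟨hnot, -⟩; exact hnot htt
  have hinter : ∀ G ⊆ ErrFreeFamily (I ∪ O) O I AS, G.Nonempty →
      ⋂₀ G ∈ ErrFreeFamily (I ∪ O) O I AS := by
    intro G hG ⟨T0, hT0⟩
    refine ⟨?_, ?_, ?_, ?_⟩
    · intro s hs
      exact fun TT hTT => (hG hTT).1 hs
    · intro s hs
      exact (hG hT0).2.1 (hs T0 hT0)
    · intro tt htt
      constructor
      · intro a ha TT hTT
        exact ((hG hTT).2.2.1 tt (htt TT hTT)).1 a ha
      · intro d hd TT hTT
        exact ((hG hTT).2.2.1 tt (htt TT hTT)).2 d hd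
    · intro tt httr
      constructor
      · rintro ⟨hnot, e, he, hmem⟩
        rw [Set.mem_sInter] at hnot
        push_neg at hnot
        obtain ⟨TT, hTT, hnTT⟩ := hnot
        exact ((hG hTT).2.2.2 tt httr).1 ⟨hnTT, e, he, hmem TT hTT⟩
      · rintro ⟨hnot, d, hd, hdext, hall⟩
        rw [Set.mem_sInter] at hnot
        push_neg at hnot
        obtain ⟨TT, hTT, hnTT⟩ := hnot
        exact ((hG hTT).2.2.2 tt httr).2
          ⟨hnTT, d, hd, hdext TT hTT, fun d₀ h0 hlt e he => hall d₀ h0 hlt e he TT hTT⟩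
  exact ⟨hfull, hinter, hinter _ (le_refl _) ⟨_, hfull⟩⟩
end

section
/- Let GR be any set of timed traces over A = I ⊎ O. The family F of all extension-closed supersets TT of GR with respect to which no timed trace is auto-⊤ or semi-⊤ contains the set of all timed traces and is closed under arbitrary nonempty intersections. Consequently, the intersection of all members of F itself belongs to F, i.e. there exists a least extension-closed superset GR^R of GR with respect to which no timed trace is auto-⊤ or semi-⊤ (the realisation, or ⊤-backpropagation, of GR is well defined). -/
open Classical

lemma tcat_head {α : Type*} (z : TEvent α) (zs ys : List (TEvent α)) :
    ∃ w l, tcat (z :: zs) ys = w :: l ∧ w.isLeft = z.isLeft := by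
  match z, zs, ys with
  | Sum.inr d, [], Sum.inr d' :: ys => exact ⟨_, _, rfl, rfl⟩
  | Sum.inl a, zs, ys => exact ⟨_, _, rfl, rfl⟩
  | Sum.inr d, [], [] => exact ⟨_, _, rfl, rfl⟩
  | Sum.inr d, [], Sum.inl a :: ys => exact ⟨_, _, rfl, rfl⟩
  | Sum.inr d, z' :: zs, ys => exact ⟨_, _, rfl, rfl⟩

lemma isTrace_tcat {α : Type*} {A : Set α} (xs : List (TEvent α)) :
    ∀ ys, IsTrace A xs → IsTrace A ys → IsTrace A (tcat xs ys) := by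
  induction xs with
  | nil => intro ys _ hy; simpa [tcat] using hy
  | cons x xs ih =>
    intro ys hx hy
    have hx' : IsTrace A xs :=
      ⟨fun z hz => hx.1 z (List.mem_cons_of_mem _ hz), hx.2.tail⟩
    match x, xs, ys with
    | Sum.inr d, [], Sum.inr d' :: ys' =>
      show IsTrace A (Sum.inr (d + d') :: ys')
      refine ⟨?_, ?_⟩
      · intro z hz
        rcases List.mem_cons.1 hz with h | h
        · subst h
          have hd : (0:ℝ) < d := by simpa using hx.1 (Sum.inr d) (by simp)
          have hd' : (0:ℝ) < d' := by simpa using hy.1 (Sum.inr d') (by simp)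
          simpa using add_pos hd hd'
        · exact hy.1 z (List.mem_cons_of_mem _ h)
      · have h := List.isChain_cons.mp hy.2
        exact List.isChain_cons.mpr
          ⟨fun y hy' => Or.inr (by simpa using h.1 y hy'), h.2⟩
    | Sum.inl a, xs, ys =>
      show IsTrace A (Sum.inl a :: tcat xs ys)
      have hih := ih ys hx' hy
      refine ⟨?_, ?_⟩
      · intro z hz
        rcases List.mem_cons.1 hz with h | h
        · subst h; exact hx.1 (Sum.inl a) (by simp)
        · exact hih.1 z h
      · exact List.isChain_cons.mpr ⟨fun y _ => Or.inl rfl, hih.2⟩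
    | Sum.inr d, [], [] =>
      show IsTrace A [Sum.inr d]
      exact hx
    | Sum.inr d, [], Sum.inl a :: ys' =>
      show IsTrace A (Sum.inr d :: Sum.inl a :: ys')
      refine ⟨?_, ?_⟩
      · intro z hz
        rcases List.mem_cons.1 hz with h | h
        · subst h; exact hx.1 (Sum.inr d) (by simp)
        · exact hy.1 z h
      · exact List.isChain_cons.mpr ⟨fun y hy' => by simp at hy'; subst hy'; exact Or.inr rfl, hy.2⟩
    | Sum.inr d, z' :: zs, ys =>
      show IsTrace A (Sum.inr d :: tcat (z' :: zs) ys)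
      have hih := ih ys hx' hy
      obtain ⟨w, l, heq, hw⟩ := tcat_head z' zs ys
      have hz' : z'.isLeft = true := by
        have := List.isChain_cons_cons.mp hx.2
        rcases this.1 with h | h
        · simp at h
        · exact h
      refine ⟨?_, ?_⟩
      · intro z hz
        rcases List.mem_cons.1 hz with h | h
        · subst h; exact hx.1 (Sum.inr d) (by simp)
        · exact hih.1 z h
      · refine List.isChain_cons.mpr ⟨?_, hih.2⟩
        intro y hy'
        rw [heq] at hy'
        simp at hy'
        subst hy'
        exact Or.inr (hw.trans hz')

lemma isTrace_single_act {α : Type*} {A : Set α} {a : α} (ha : a ∈ A) :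
    IsTrace A [Sum.inl a] := ⟨by simpa using ha, List.isChain_singleton _⟩

lemma isTrace_single_delay {α : Type*} {A : Set α} {d : ℝ} (hd : 0 < d) :
    IsTrace A [Sum.inr d] := ⟨by simpa using hd, List.isChain_singleton _⟩

/-- The family of extension-closed supersets of `GR` free of auto-⊤ and semi-⊤
traces contains the set of all timed traces, is closed under nonempty
intersections, and hence has a least element `GR^R` (realisation is well
defined). -/
theorem realisation_well_defined {α : Type*} (I O : Set α)
    (hIO : Disjoint I O) (GR : Set (List (TEvent α)))
    (hGR : GR ⊆ {tt | IsTrace (I ∪ O) tt}) :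
    {tt | IsTrace (I ∪ O) tt} ∈ ErrFreeFamily (I ∪ O) I O GR ∧
    (∀ G ⊆ ErrFreeFamily (I ∪ O) I O GR, G.Nonempty →
      ⋂₀ G ∈ ErrFreeFamily (I ∪ O) I O GR) ∧
    backprop (I ∪ O) I O GR ∈ ErrFreeFamily (I ∪ O) I O GR := by
  have hUniv : {tt | IsTrace (I ∪ O) tt} ∈ ErrFreeFamily (I ∪ O) I O GR := by
    refine ⟨hGR, fun _ h => h, ?_, ?_⟩
    · intro tt htt
      exact ⟨fun a ha => isTrace_tcat tt _ htt (isTrace_single_act ha),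
             fun d hd => isTrace_tcat tt _ htt (isTrace_single_delay hd)⟩
    · intro tt htr
      exact ⟨fun h => h.1 htr, fun h => h.1 htr⟩
  have hInter : ∀ G ⊆ ErrFreeFamily (I ∪ O) I O GR, G.Nonempty →
      ⋂₀ G ∈ ErrFreeFamily (I ∪ O) I O GR := by
    intro G hG ⟨T0, hT0⟩
    refine ⟨?_, ?_, ?_, ?_⟩
    · intro tt htt
      exact Set.mem_sInter.mpr fun T hT => (hG hT).1 htt
    · intro tt htt
      exact (hG hT0).2.1 (htt T0 hT0)
    · intro tt htt
      constructor
      · intro a ha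
        exact Set.mem_sInter.mpr fun T hT => ((hG hT).2.2.1 tt (htt T hT)).1 a ha
      · intro d hd
        exact Set.mem_sInter.mpr fun T hT => ((hG hT).2.2.1 tt (htt T hT)).2 d hd
    · intro tt htr
      constructor
      · rintro ⟨hnot, e, he, hmem⟩
        obtain ⟨T, hT, hnT⟩ : ∃ T ∈ G, tt ∉ T := by
          by_contra h
          push_neg at h
          exact hnot (Set.mem_sInter.mpr h)
        exact ((hG hT).2.2.2 tt htr).1 ⟨hnT, e, he, hmem T hT⟩
      · rintro ⟨hnot, d, hd, hdext, hall⟩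
        obtain ⟨T, hT, hnT⟩ : ∃ T ∈ G, tt ∉ T := by
          by_contra h
          push_neg at h
          exact hnot (Set.mem_sInter.mpr h)
        exact ((hG hT).2.2.2 tt htr).2
          ⟨hnT, d, hd, hdext T hT,
           fun d₀ h₀ h₁ e he => hall d₀ h₀ h₁ e he T hT⟩
  exact ⟨hUniv, hInter,
    hInter _ (fun T hT => hT) ⟨_, hUniv⟩⟩
end

section
/- Alphabet enlargement preserves receptivity of complements: let GR be an extension-closed set of timed traces over A = I ⊎ O whose complement is I-receptive, and let Δ be a set of fresh actions disjoint from A, regarded as inputs of the enlarged alphabet A ∪ Δ = (I ∪ Δ) ⊎ O. Then GR^Δ is extension-closed over A ∪ Δ and its complement (in the set of all timed traces over A ∪ Δ) is (I ∪ Δ)-receptive. -/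
open Classical

/-- Alphabet enlargement: `TT^Δ` consists of the timed traces over `A ∪ Δ` of
the form `tt₀⌢tt₁` where `tt₀↾A ∈ TT`. -/
noncomputable def enlarge {α : Type*} (A Δ : Set α) (TT : Set (List (TEvent α))) :
    Set (List (TEvent α)) :=
  {tt | ∃ tt₀ tt₁, IsTrace (A ∪ Δ) tt₀ ∧ IsTrace (A ∪ Δ) tt₁ ∧
    proj A tt₀ ∈ TT ∧ tt = tcat tt₀ tt₁}

section Lemmas
variable {α : Type*}

lemma tcat_inl (a : α) (xs ys : List (TEvent α)) :
    tcat (Sum.inl a :: xs) ys = Sum.inl a :: tcat xs ys := by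
  cases xs <;> cases ys <;> rfl
lemma tcat_cons_cons (x y : TEvent α) (xs ys : List (TEvent α)) :
    tcat (x :: y :: xs) ys = x :: tcat (y :: xs) ys := by
  cases x <;> cases ys <;> rfl
lemma tcat_inr_inr (d d' : ℝ) (ys : List (TEvent α)) :
    tcat [Sum.inr d] (Sum.inr d' :: ys) = Sum.inr (d + d') :: ys := rfl
lemma tcat_inr_inl (d : ℝ) (a : α) (ys : List (TEvent α)) :
    tcat [Sum.inr d] (Sum.inl a :: ys) = Sum.inr d :: Sum.inl a :: ys := rfl
lemma tcat_inr_nil (d : ℝ) : tcat [Sum.inr d] ([] : List (TEvent α)) = [Sum.inr d] := rfl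

@[simp] lemma tcat_nil_right (xs : List (TEvent α)) : tcat xs [] = xs := by
  induction xs with
  | nil => rfl
  | cons x xs ih =>
    cases xs with
    | nil => cases x <;> rfl
    | cons y t => rw [tcat_cons_cons, ih]

lemma tcat_ne_nil {xs : List (TEvent α)} (h : xs ≠ []) (ys : List (TEvent α)) :
    tcat xs ys ≠ [] := by
  match xs, ys with
  | [], _ => exact absurd rfl h
  | [Sum.inl a], ys => rw [tcat_inl]; simp
  | [Sum.inr d], [] => simp [tcat_inr_nil]
  | [Sum.inr d], Sum.inl a :: ys => simp [tcat_inr_inl]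
  | [Sum.inr d], Sum.inr d' :: ys => simp [tcat_inr_inr]
  | x :: y :: t, ys => rw [tcat_cons_cons]; simp

lemma tcat_head_isLeft {xs : List (TEvent α)} (h : xs ≠ []) (ys : List (TEvent α)) :
    (tcat xs ys).head?.map Sum.isLeft = xs.head?.map Sum.isLeft := by
  match xs, ys with
  | [], _ => exact absurd rfl h
  | [Sum.inl a], ys => rw [tcat_inl]; rfl
  | [Sum.inr d], [] => rfl
  | [Sum.inr d], Sum.inl a :: ys => rfl
  | [Sum.inr d], Sum.inr d' :: ys => rfl
  | x :: y :: t, ys => rw [tcat_cons_cons]; rfl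

lemma tcat_assoc (x y z : List (TEvent α)) :
    tcat (tcat x y) z = tcat x (tcat y z) := by
  induction x with
  | nil => rfl
  | cons a t ih =>
    cases t with
    | cons b t' =>
      rw [tcat_cons_cons]
      obtain ⟨c, w, hw⟩ : ∃ c w, tcat (b :: t') y = c :: w := by
        cases h : tcat (b :: t') y with
        | nil => exact absurd h (tcat_ne_nil (by simp) y)
        | cons c w => exact ⟨c, w, rfl⟩
      rw [hw, tcat_cons_cons, ← hw, ih, tcat_cons_cons]
    | nil =>
      cases a with
      | inl a => rw [tcat_inl, tcat_inl, tcat_inl]; rfl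
      | inr d =>
        cases y with
        | nil => rfl
        | cons b y' =>
          cases b with
          | inl b =>
            rw [tcat_inr_inl, tcat_cons_cons, tcat_inl, tcat_inr_inl]
          | inr d' =>
            cases y' with
            | nil =>
              rw [tcat_inr_inr]
              cases z with
              | nil => simp [tcat_inr_inr]
              | cons c z' =>
                cases c with
                | inl c => rfl
                | inr d'' => rw [tcat_inr_inr, tcat_inr_inr, tcat_inr_inr, add_assoc]
            | cons c y'' =>
              rw [tcat_inr_inr, tcat_cons_cons, tcat_cons_cons, tcat_inr_inr]

lemma proj_nil (A₀ : Set α) : proj A₀ ([] : List (TEvent α)) = [] := rfl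
lemma proj_cons_inl (A₀ : Set α) (a : α) (xs : List (TEvent α)) :
    proj A₀ (Sum.inl a :: xs) =
      if a ∈ A₀ then Sum.inl a :: proj A₀ xs else proj A₀ xs := rfl
lemma proj_cons_inr (A₀ : Set α) (d : ℝ) (xs : List (TEvent α)) :
    proj A₀ (Sum.inr d :: xs) = tcat [Sum.inr d] (proj A₀ xs) := rfl

lemma isTrace_mono {A B : Set α} (h : A ⊆ B) {tt : List (TEvent α)}
    (ht : IsTrace A tt) : IsTrace B tt := by
  refine ⟨fun x hx => ?_, ht.2⟩
  have := ht.1 x hx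
  cases x with
  | inl a => exact h this
  | inr d => exact this

lemma isTrace_nil (A : Set α) : IsTrace A ([] : List (TEvent α)) := ⟨by simp, List.isChain_nil⟩

lemma isTrace_single_inl {A : Set α} {a : α} (ha : a ∈ A) :
    IsTrace A [Sum.inl a] := ⟨by simpa using ha, List.isChain_singleton _⟩

lemma isTrace_single_inr (A : Set α) {d : ℝ} (hd : 0 < d) :
    IsTrace A [Sum.inr d] := ⟨by simpa using hd, List.isChain_singleton _⟩

lemma isTrace_tail {A : Set α} {x : TEvent α} {xs : List (TEvent α)}
    (h : IsTrace A (x :: xs)) : IsTrace A xs :=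
  ⟨fun z hz => h.1 z (List.mem_cons_of_mem _ hz), h.2.tail⟩

lemma isTrace_tcat_s15 {A : Set α} {x y : List (TEvent α)}
    (hx : IsTrace A x) (hy : IsTrace A y) : IsTrace A (tcat x y) := by
  induction x with
  | nil => exact hy
  | cons a t ih =>
    have ht : IsTrace A t := isTrace_tail hx
    cases t with
    | cons b t' =>
      rw [tcat_cons_cons]
      have h1 : IsTrace A (tcat (b :: t') y) := ih ht
      refine ⟨?_, ?_⟩
      · intro z hz
        rcases List.mem_cons.mp hz with rfl | hz'
        · exact hx.1 _ (by simp)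
        · exact h1.1 z hz'
      · rw [List.Chain', List.isChain_cons]
        refine ⟨?_, h1.2⟩
        intro z hz
        have hR : a.isLeft = true ∨ b.isLeft = true :=
          (List.isChain_cons_cons.mp hx.2).1
        have hz2 : (tcat (b :: t') y).head? = some z := hz
        have := tcat_head_isLeft (by simp : (b :: t' : List (TEvent α)) ≠ []) y
        rw [hz2] at this
        simp only [List.head?_cons, Option.map_some] at this
        rcases hR with h | h
        · exact Or.inl h
        · right; rw [Option.some.injEq] at this; rw [this]; exact h
    | nil =>
      cases a with
      | inl a =>
        rw [tcat_inl]
        refine ⟨?_, ?_⟩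
        · intro z hz
          rcases List.mem_cons.mp hz with rfl | hz'
          · exact hx.1 _ (by simp)
          · exact hy.1 z hz'
        · rw [List.Chain', List.isChain_cons]
          exact ⟨fun z _ => Or.inl rfl, hy.2⟩
      | inr d =>
        have hd : (0:ℝ) < d := by simpa using hx.1 (Sum.inr d) (by simp)
        cases y with
        | nil => rw [tcat_inr_nil]; exact hx
        | cons b y' =>
          cases b with
          | inl b =>
            rw [tcat_inr_inl]
            refine ⟨?_, ?_⟩
            · intro z hz
              rcases List.mem_cons.mp hz with rfl | hz'
              · exact hd
              · exact hy.1 z hz'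
            · rw [List.Chain', List.isChain_cons]
              exact ⟨fun z hz => by simp at hz; rw [← hz]; exact Or.inr rfl, hy.2⟩
          | inr d' =>
            rw [tcat_inr_inr]
            have hd' : (0:ℝ) < d' := by simpa using hy.1 (Sum.inr d') (by simp)
            refine ⟨?_, ?_⟩
            · intro z hz
              rcases List.mem_cons.mp hz with rfl | hz'
              · exact add_pos hd hd'
              · exact hy.1 z (List.mem_cons_of_mem _ hz')
            · rw [List.Chain', List.isChain_cons]
              have := List.isChain_cons.mp hy.2
              exact ⟨this.1, this.2⟩

lemma tcat_single_cons {x : TEvent α} {w : List (TEvent α)}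
    (h : x.isLeft = true ∨ ∀ z ∈ w.head?, z.isLeft = true) :
    tcat [x] w = x :: w := by
  cases x with
  | inl a => rw [tcat_inl]; rfl
  | inr d =>
    cases w with
    | nil => exact tcat_inr_nil d
    | cons b w' =>
      cases b with
      | inl b => exact tcat_inr_inl d b w'
      | inr d' =>
        rcases h with h | h
        · simp at h
        · have := h (Sum.inr d') rfl; simp at this

lemma ext_tcat {A : Set α} {TT : Set (List (TEvent α))} (hext : ExtClosed A TT) :
    ∀ w : List (TEvent α), IsTrace A w → ∀ s ∈ TT, tcat s w ∈ TT := by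
  intro w
  induction w with
  | nil => intro _ s hs; rw [tcat_nil_right]; exact hs
  | cons x w' ih =>
    intro hw s hs
    have h1 : tcat [x] w' = x :: w' := by
      apply tcat_single_cons
      cases x with
      | inl a => exact Or.inl rfl
      | inr d =>
        right; intro z hz
        rcases (List.isChain_cons.mp hw.2).1 z hz with h | h
        · simp at h
        · exact h
    have h2 : tcat s (x :: w') = tcat (tcat s [x]) w' := by
      rw [tcat_assoc, h1]
    rw [h2]
    have hx : tcat s [x] ∈ TT := by
      cases x with
      | inl a => exact (hext s hs).1 a (by simpa using hw.1 (Sum.inl a) (by simp))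
      | inr d => exact (hext s hs).2 d (by simpa using hw.1 (Sum.inr d) (by simp))
    exact ih (isTrace_tail hw) _ hx

lemma proj_tcat (A₀ : Set α) (x y : List (TEvent α)) :
    proj A₀ (tcat x y) = tcat (proj A₀ x) (proj A₀ y) := by
  induction x with
  | nil => rfl
  | cons a t ih =>
    cases t with
    | cons b t' =>
      rw [tcat_cons_cons]
      cases a with
      | inl a =>
        rw [proj_cons_inl, proj_cons_inl]
        by_cases ha : a ∈ A₀
        · rw [if_pos ha, if_pos ha, ih, tcat_inl]
        · rw [if_neg ha, if_neg ha, ih]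
      | inr d =>
        rw [proj_cons_inr, proj_cons_inr, ih, ← tcat_assoc]
    | nil =>
      cases a with
      | inl a =>
        rw [tcat_inl, show tcat ([] : List (TEvent α)) y = y from rfl,
          proj_cons_inl, proj_cons_inl, proj_nil]
        by_cases ha : a ∈ A₀
        · rw [if_pos ha, if_pos ha, tcat_single_cons (x := Sum.inl a) (Or.inl rfl)]
        · rw [if_neg ha, if_neg ha]; rfl
      | inr d =>
        cases y with
        | nil => rw [tcat_nil_right, proj_nil, tcat_nil_right]
        | cons c y' =>
          cases c with
          | inl c =>
            rw [tcat_inr_inl, proj_cons_inr, proj_cons_inr, proj_cons_inl,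
              proj_nil, tcat_nil_right]
          | inr d' =>
            rw [tcat_inr_inr, proj_cons_inr, proj_cons_inr, proj_cons_inr,
              proj_nil, tcat_nil_right, ← tcat_assoc, tcat_inr_inr]

lemma proj_isTrace {B : Set α} (A₀ : Set α) {tt : List (TEvent α)}
    (h : IsTrace B tt) : IsTrace A₀ (proj A₀ tt) := by
  induction tt with
  | nil => exact isTrace_nil A₀
  | cons x xs ih =>
    have h' := ih (isTrace_tail h)
    cases x with
    | inl a =>
      rw [proj_cons_inl]
      by_cases ha : a ∈ A₀
      · rw [if_pos ha]
        have : Sum.inl a :: proj A₀ xs = tcat [Sum.inl a] (proj A₀ xs) := by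
          rw [tcat_single_cons (x := Sum.inl a) (Or.inl rfl)]
        rw [this]
        exact isTrace_tcat_s15 (isTrace_single_inl ha) h'
      · rw [if_neg ha]; exact h'
    | inr d =>
      have hd : (0:ℝ) < d := by simpa using h.1 (Sum.inr d) (by simp)
      rw [proj_cons_inr]
      exact isTrace_tcat_s15 (isTrace_single_inr A₀ hd) h'

lemma proj_eq_self {A₀ : Set α} {w : List (TEvent α)} (hw : IsTrace A₀ w) :
    proj A₀ w = w := by
  induction w with
  | nil => rfl
  | cons x xs ih =>
    have h' := ih (isTrace_tail hw)
    cases x with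
    | inl a =>
      have ha : a ∈ A₀ := by simpa using hw.1 (Sum.inl a) (by simp)
      rw [proj_cons_inl, if_pos ha, h']
    | inr d =>
      rw [proj_cons_inr, h']
      apply tcat_single_cons
      right; intro z hz
      rcases (List.isChain_cons.mp hw.2).1 z hz with h | h
      · simp at h
      · exact h

lemma mem_enlarge_iff {A Δ : Set α} {GR : Set (List (TEvent α))}
    (hext : ExtClosed A GR) (tt : List (TEvent α)) :
    tt ∈ enlarge A Δ GR ↔ IsTrace (A ∪ Δ) tt ∧ proj A tt ∈ GR := by
  constructor
  · rintro ⟨tt₀, tt₁, h₀, h₁, hm, rfl⟩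
    refine ⟨isTrace_tcat_s15 h₀ h₁, ?_⟩
    rw [proj_tcat]
    exact ext_tcat hext _ (proj_isTrace A h₁) _ hm
  · rintro ⟨htr, hm⟩
    exact ⟨tt, [], htr, isTrace_nil _, hm, (tcat_nil_right tt).symm⟩

end Lemmas

/-- Alphabet enlargement preserves receptivity of complements: if the
complement of the extension-closed set `GR` is I-receptive, and the fresh
actions `Δ` are regarded as inputs of the enlarged alphabet `(I ∪ Δ) ⊎ O`,
then `GR^Δ` is extension-closed over `(I ∪ O) ∪ Δ` and its complement is
`(I ∪ Δ)`-receptive. -/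

theorem enlarge_compl_receptive {α : Type*} (I O Δ : Set α)
    (hIO : Disjoint I O) (hΔ : Disjoint (I ∪ O) Δ)
    (GR : Set (List (TEvent α)))
    (hGR : GR ⊆ {tt | IsTrace (I ∪ O) tt})
    (hext : ExtClosed (I ∪ O) GR)
    (hrec : Receptive I ({tt | IsTrace (I ∪ O) tt} \ GR)) :
    ExtClosed ((I ∪ O) ∪ Δ) (enlarge (I ∪ O) Δ GR) ∧
      Receptive (I ∪ Δ)
        ({tt | IsTrace ((I ∪ O) ∪ Δ) tt} \ enlarge (I ∪ O) Δ GR) := by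
  set A : Set α := I ∪ O with hA
  set A' : Set α := (I ∪ O) ∪ Δ with hA'
  have key : ∀ tt, tt ∈ enlarge A Δ GR ↔ IsTrace A' tt ∧ proj A tt ∈ GR :=
    fun tt => mem_enlarge_iff hext tt
  have hAΔ : ∀ a ∈ Δ, a ∉ A := fun a ha => Set.disjoint_right.mp hΔ ha
  have hIA' : I ⊆ A' := fun a ha => Or.inl (Or.inl ha)
  have hIA : I ⊆ A := fun a ha => Or.inl ha
  constructor
  · -- extension closure
    intro tt htt
    obtain ⟨htr, hm⟩ := (key tt).mp htt
    constructor
    · intro a ha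
      refine (key _).mpr ⟨isTrace_tcat_s15 htr (isTrace_single_inl ha), ?_⟩
      rw [proj_tcat, proj_cons_inl, proj_nil]
      rcases ha with haA | haΔ
      · rw [if_pos haA]
        exact (hext _ hm).1 a haA
      · rw [if_neg (hAΔ a haΔ), tcat_nil_right]
        exact hm
    · intro d hd
      refine (key _).mpr ⟨isTrace_tcat_s15 htr (isTrace_single_inr _ hd), ?_⟩
      rw [proj_tcat, proj_cons_inr, proj_nil, tcat_nil_right]
      exact (hext _ hm).2 d hd
  · -- receptivity of complement
    intro tt htt
    obtain ⟨htr, hnE⟩ := htt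
    have hnGR : proj A tt ∉ GR := fun h => hnE ((key tt).mpr ⟨htr, h⟩)
    have hc : proj A tt ∈ {s | IsTrace A s} \ GR := ⟨proj_isTrace A htr, hnGR⟩
    constructor
    · intro e he
      have heA' : e ∈ A' := by
        rcases he with he | he
        · exact Or.inl (Or.inl he)
        · exact Or.inr he
      have htr' : IsTrace A' (tcat tt [Sum.inl e]) :=
        isTrace_tcat_s15 htr (isTrace_single_inl heA')
      refine ⟨htr', fun hmem => ?_⟩
      have hpr := ((key _).mp hmem).2
      rw [proj_tcat, proj_cons_inl, proj_nil] at hpr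
      rcases he with heI | heΔ
      · rw [if_pos (hIA heI)] at hpr
        exact ((hrec _ hc).1 e heI).2 hpr
      · rw [if_neg (hAΔ e heΔ), tcat_nil_right] at hpr
        exact hnGR hpr
    · intro d hd hnc
      have htrd : IsTrace A' (tcat tt [Sum.inr d]) :=
        isTrace_tcat_s15 htr (isTrace_single_inr _ hd)
      have hmemE : tcat tt [Sum.inr d] ∈ enlarge A Δ GR := by
        by_contra h
        exact hnc ⟨htrd, h⟩
      have hpr := ((key _).mp hmemE).2
      rw [proj_tcat, proj_cons_inr, proj_nil, tcat_nil_right] at hpr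
      have hnot2 : tcat (proj A tt) [Sum.inr d] ∉ {s | IsTrace A s} \ GR :=
        fun h => h.2 hpr
      obtain ⟨w, hw0, hwI, hwlast, hwmem, hwdur⟩ := (hrec _ hc).2 d hd hnot2
      refine ⟨w, hw0, isTrace_mono Set.subset_union_left hwI, hwlast, ?_, hwdur⟩
      have hwA : IsTrace A w := isTrace_mono hIA hwI
      refine ⟨isTrace_tcat_s15 htr (isTrace_mono hIA' hwI), fun hmem => ?_⟩
      have hpr2 := ((key _).mp hmem).2
      rw [proj_tcat, proj_eq_self hwA] at hpr2
      exact hwmem.2 hpr2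
end
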